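/- Let p be an odd prime. If an integer y is not a p-th power in ℤ, then y is not a p-th power in the cyclotomic field ℚ(ζ_p). -/

import Mathlib

theorem not_pth_power_in_cyclotomic
    (p : ℕ) (hp : p.Prime) (hodd : Odd p) (y : ℤ)
    (hy : ¬ ∃ m : ℤ, y = m ^ p) :
    ¬ ∃ x : CyclotomicField p ℚ, (y : CyclotomicField p ℚ) = x ^ p := by
  rintro ⟨x, hx⟩
  have hpy : ∀ b : ℚ, b ^ p ≠ (y : ℚ) := by
    intro b hb
    have hint : IsIntegral ℤ b := by
      refine ⟨Polynomial.X ^ p - Polynomial.C y, ?_, ?_⟩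
      · exact Polynomial.monic_X_pow_sub_C _ hp.ne_zero
      · rw [Polynomial.eval₂_sub, Polynomial.eval₂_pow, Polynomial.eval₂_X,
          Polynomial.eval₂_C, hb]
        simp
    obtain ⟨m, hm⟩ := IsIntegrallyClosed.isIntegral_iff.mp hint
    rw [eq_intCast] at hm
    apply hy ⟨m, ?_⟩
    have : ((m : ℚ)) ^ p = (y : ℚ) := by rw [hm]; exact hb
    exact_mod_cast this.symm
  have hirr : Irreducible (Polynomial.X ^ p - Polynomial.C (y : ℚ)) :=
    X_pow_sub_C_irreducible_of_prime hp hpy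
  have hroot : Polynomial.aeval x (Polynomial.X ^ p - Polynomial.C (y : ℚ)) = 0 := by
    rw [map_sub, map_pow, Polynomial.aeval_X, Polynomial.aeval_C, sub_eq_zero, ← hx]
    rw [map_intCast]
  have hmin : minpoly ℚ x = Polynomial.X ^ p - Polynomial.C (y : ℚ) :=
    (minpoly.eq_of_irreducible_of_monic hirr hroot
      (Polynomial.monic_X_pow_sub_C _ hp.ne_zero)).symm
  haveI : NeZero p := ⟨hp.ne_zero⟩
  haveI : NeZero ((p : ℕ) : ℚ) := ⟨by exact_mod_cast hp.pos.ne'⟩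
  haveI := CyclotomicField.isCyclotomicExtension p ℚ
  haveI := @IsCyclotomicExtension.finiteDimensional {p} ℚ _
    (CyclotomicField p ℚ) _ _ _ _ this
  have hintx : IsIntegral ℚ x := .of_finite ℚ x
  have hdvd := minpoly.degree_dvd hintx
  rw [hmin, Polynomial.natDegree_X_pow_sub_C] at hdvd
  have hfr : Module.finrank ℚ (CyclotomicField p ℚ)
      = p.totient :=
    @IsCyclotomicExtension.finrank _ _ _ _ _ _ _ _ (CyclotomicField.isCyclotomicExtension p ℚ) (Polynomial.cyclotomic.irreducible_rat
      hp.pos)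
  rw [hfr, Nat.totient_prime hp] at hdvd
  have h2 := hp.two_le
  have := Nat.le_of_dvd (by omega) hdvd
  omega
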